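/- Let 𝐫 = ((r_1,s_1),…,(r_v,s_v)) and 𝐭 = ((t_1,u_1),…,(t_w,u_w)) be vectors of pairs of integers with all s_i, u_j ≠ 0. Then there exists a positive integer B such that for every integer b ≥ B, any two distinct points of discontinuity of the step function Δ_b^{𝐫,𝐭} : ℝ → ℝ are at distance at least 1/b from each other. -/

import Mathlib

open Polynomial
open scoped Classical

noncomputable section

/-- The generalized Dwork map `D_b(α)`: the unique rational whose reduced denominator is
coprime to `b` and such that `b·D_b(α) − α ∈ {0, 1, …, b−1}`. -/
def dwork (b : ℕ) (α : ℚ) : ℚ :=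
  if h : ∃ θ : ℚ, Nat.Coprime θ.den b ∧ ∃ k : ℤ, 0 ≤ k ∧ k < (b : ℤ) ∧ (b : ℚ) * θ - α = (k : ℚ)
  then h.choose else 0

/-- `α ∈ ℤ_{≤0}`. -/
def IsNonPosInt (α : ℚ) : Prop := ∃ m : ℤ, m ≤ 0 ∧ α = (m : ℚ)

/-- `α ∈ ℤ_{>0}`. -/
def IsPosInt (α : ℚ) : Prop := ∃ m : ℤ, 0 < m ∧ α = (m : ℚ)

/-- `𝔫_α`. -/
def frakn (α : ℚ) : ℤ := if 0 ≤ α then α.num else |α.num| + 1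

/-- `⟨x⟩`: the fractional part of `x` if `x ∉ ℤ`, and `1` if `x ∈ ℤ`. -/
def cangle (x : ℝ) : ℝ := if ∃ m : ℤ, x = (m : ℝ) then 1 else Int.fract x

/-- Christol order `x ⪯ y`. -/
def cle (x y : ℝ) : Prop := cangle x < cangle y ∨ (cangle x = cangle y ∧ y ≤ x)

/-- The step function `δ_b(r, s, ·)`. -/
def qdelta (b : ℕ) (r s : ℤ) (x : ℝ) : ℤ :=
  if Int.gcd (s / (Nat.gcd (Int.gcd r s) b : ℤ)) (((b / Nat.gcd (Int.gcd r s) b : ℕ)) : ℤ) = 1 then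
    ⌊(Nat.gcd (Int.gcd r s) b : ℝ) * x
        - ((dwork (b / Nat.gcd (Int.gcd r s) b) ((r : ℚ) / (s : ℚ)) : ℚ) : ℝ)
        - ((⌊1 - (r : ℚ) / (s : ℚ)⌋ : ℤ) : ℝ) / ((b / Nat.gcd (Int.gcd r s) b : ℕ) : ℝ)⌋ + 1
  else 0

/-- The Landau-type step function `Δ_b^{𝐫,𝐭}`. -/
def qDeltaFn {v w : ℕ} (b : ℕ) (rr : Fin v → ℤ × ℤ) (tt : Fin w → ℤ × ℤ) (x : ℝ) : ℤ :=
  (∑ i, qdelta b (rr i).1 (rr i).2 x) - (∑ j, qdelta b (tt j).1 (tt j).2 x)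

/-- The q-Pochhammer symbol `(q^r; q^s)_n` for `n ∈ ℕ`, inside `ℚ(q)`. -/
def qPoch (r s : ℤ) (n : ℕ) : RatFunc ℚ :=
  ∏ i ∈ Finset.range n, (1 - RatFunc.X ^ (r + s * (i : ℤ)))

/-- The q-Pochhammer symbol `(q^r; q^s)_n` for `n ∈ ℤ`. -/
def qPochZ (r s : ℤ) (n : ℤ) : RatFunc ℚ :=
  if 0 ≤ n then qPoch r s n.toNat else (qPoch (r - s) (-s) (-n).toNat)⁻¹

/-- Multiplicity of `p` in `g`: the largest `k` with `p^k ∣ g`. -/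
def polyMult (p g : Polynomial ℚ) : ℕ := sSup {k : ℕ | p ^ k ∣ g}

/-- The valuation `v_{φ_b}` on `ℚ(q)` attached to the `b`-th cyclotomic polynomial. -/
def cycVal (b : ℕ) (f : RatFunc ℚ) : ℤ :=
  (polyMult (cyclotomic b ℚ) f.num : ℤ) - (polyMult (cyclotomic b ℚ) f.denom : ℤ)

/-- The image of an integer polynomial in `ℚ(q)`. -/
def polyZ (g : Polynomial ℤ) : RatFunc ℚ :=
  algebraMap (Polynomial ℚ) (RatFunc ℚ) (g.map (Int.castRingHom ℚ))

/-- `f ∈ ℤ[q⁻¹, q]`. -/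
def IsIntLaurent (f : RatFunc ℚ) : Prop :=
  ∃ (m : ℕ) (g : Polynomial ℤ), f * RatFunc.X ^ m = polyZ g

/-- `f ∈ ℤ[q]`. -/
def IsIntPoly (f : RatFunc ℚ) : Prop := ∃ g : Polynomial ℤ, f = polyZ g

/-- The ratio attached to a pair of integers. -/
def ratOf (p : ℤ × ℤ) : ℚ := (p.1 : ℚ) / (p.2 : ℚ)

/-- The q-hypergeometric term `Q_{𝐫,𝐭}(q; n)`, `n ∈ ℕ`. -/
def qHyp {v w : ℕ} (rr : Fin v → ℤ × ℤ) (tt : Fin w → ℤ × ℤ) (n : ℕ) : RatFunc ℚ :=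
  (∏ i, qPoch (rr i).1 (rr i).2 n) / (∏ j, qPoch (tt j).1 (tt j).2 n)

/-- The q-hypergeometric term `Q_{𝐫,𝐭}(q; n)`, `n ∈ ℤ`. -/
def qHypZ {v w : ℕ} (rr : Fin v → ℤ × ℤ) (tt : Fin w → ℤ × ℤ) (n : ℤ) : RatFunc ℚ :=
  (∏ i, qPochZ (rr i).1 (rr i).2 n) / (∏ j, qPochZ (tt j).1 (tt j).2 n)

/-- `c := gcd(r, s, b)`. -/
def cOf (p : ℤ × ℤ) (b : ℕ) : ℕ := Nat.gcd (Int.gcd p.1 p.2) b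

/-- Membership in `V_b` (resp. `W_b`): `gcd(s, b) = gcd(r, s, b)`. -/
def inV (p : ℤ × ℤ) (b : ℕ) : Prop := Nat.gcd p.2.natAbs b = cOf p b

/-- `d_{𝐫,𝐭}`: the lcm of all the `s_i` and `u_j`. -/
def dRT {v w : ℕ} (rr : Fin v → ℤ × ℤ) (tt : Fin w → ℤ × ℤ) : ℕ :=
  Nat.lcm (Finset.univ.lcm fun i => ((rr i).2).natAbs)
    (Finset.univ.lcm fun j => ((tt j).2).natAbs)

/-- `b̃`: the greatest divisor of `b` coprime to `d`. -/
def btilde (d b : ℕ) : ℕ := Nat.findGreatest (fun k => k ∣ b ∧ Nat.Coprime k d) b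

/-- The unique `a ∈ {1,…,d}` with `a·b̃ ≡ 1 (mod d)`. -/
def aOf (d b : ℕ) : ℕ :=
  if h : ∃ a, 1 ≤ a ∧ a ≤ d ∧ (a * btilde d b) % d = 1 % d then h.choose else 1

/-- The representative of `b` modulo `d` lying in `{1,…,d}`. -/
def repMod (d b : ℕ) : ℕ := if b % d = 0 then d else b % d

/-- The jump abscissa `(⟨e·α⟩ + k)/c − ⌊1 − a·α⌋`. -/
def jumpPt (p : ℤ × ℤ) (b : ℕ) (a ei : ℤ) (k : ℕ) : ℝ :=
  (cangle (((ei : ℚ) * ratOf p : ℚ) : ℝ) + (k : ℝ)) / (cOf p b : ℝ)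
    - ((⌊1 - (a : ℚ) * ratOf p⌋ : ℤ) : ℝ)

/-- Number of pairs `(i,k)` with jump abscissa `⪯ x` coming from one pair `p`. -/
def XiCount (p : ℤ × ℤ) (b : ℕ) (a ei : ℤ) (x : ℝ) : ℕ :=
  if inV p b then ((Finset.range (cOf p b)).filter fun k => cle (jumpPt p b a ei k) x).card else 0

/-- The generalized Christol step function `Ξ_{𝐫,𝐭}(b, ·)`, relative to choices `e`, `f`. -/
def Xi {v w : ℕ} (rr : Fin v → ℤ × ℤ) (tt : Fin w → ℤ × ℤ) (b : ℕ)
    (e : Fin v → ℤ) (f : Fin w → ℤ) (x : ℝ) : ℤ :=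
  (∑ i, (XiCount (rr i) b ((aOf (dRT rr tt) b : ℕ) : ℤ) (e i) x : ℤ))
    - (∑ j, (XiCount (tt j) b ((aOf (dRT rr tt) b : ℕ) : ℤ) (f j) x : ℤ))

/-- `ei` is an admissible choice for the pair `p` and `b`: positive with `b·ei ≡ c (mod s)`. -/
def goodChoice (p : ℤ × ℤ) (b : ℕ) (ei : ℤ) : Prop :=
  inV p b → 0 < ei ∧ p.2 ∣ ((b : ℤ) * ei - (cOf p b : ℤ))

end


section AuxLemmas

open Set

lemma abs_lower_of_eq (U E z : ℝ) (hz : z = U + E) : |U| - |E| ≤ |z| := by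
  have h := abs_add_le (U + E) (-E)
  rw [abs_neg] at h
  have h2 : U + E + -E = U := by ring
  rw [h2] at h
  rw [hz]
  linarith


lemma dwork_den_dvd (b : ℕ) (r s : ℤ) (hs : s ≠ 0) :
    ∃ m : ℤ, (s : ℚ) * dwork b ((r : ℚ) / (s : ℚ)) = (m : ℚ) := by
  unfold dwork
  split
  case isFalse => exact ⟨0, by simp⟩
  case isTrue h =>
    obtain ⟨hcop, k, hk0, hkb, heq⟩ := h.choose_spec
    set θ := h.choose with hθdef
    have hb : (0:ℤ) < b := lt_of_le_of_lt hk0 hkb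
    have hsQ : (s:ℚ) ≠ 0 := Int.cast_ne_zero.mpr hs
    have hbQ : ((b:ℤ):ℚ) ≠ 0 := Int.cast_ne_zero.mpr hb.ne'
    have hθ : θ = ((r + s*k : ℤ) : ℚ) / ((s * b : ℤ) : ℚ) := by
      rw [eq_div_iff (by push_cast; positivity)]
      push_cast
      have : (b:ℚ) * θ = (r:ℚ)/(s:ℚ) + k := by linarith [heq]
      field_simp at this ⊢
      nlinarith [this]
    have hden : (θ.den : ℤ) ∣ s * b := by
      rw [hθ, ← Rat.divInt_eq_div]
      exact Rat.den_dvd _ _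
    have hden2 : θ.den ∣ s.natAbs * b := by
      have := Int.natAbs_dvd_natAbs.mpr hden
      simpa [Int.natAbs_mul] using this
    have hden3 : θ.den ∣ s.natAbs := (Nat.Coprime.dvd_of_dvd_mul_right hcop hden2)
    have hden4 : (θ.den : ℤ) ∣ s := (Int.natAbs_dvd_natAbs.mp (by simpa using hden3))
    obtain ⟨t, ht⟩ := hden4
    refine ⟨t * θ.num, ?_⟩
    rw [ht]
    push_cast
    rw [mul_comm (θ.den:ℚ) (t:ℚ), mul_assoc]
    congr 1
    rw [mul_comm]
    rw [Rat.mul_den_eq_num]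


lemma qdelta_discont (b : ℕ) (r s : ℤ) (x : ℝ)
    (h : ¬ ContinuousAt (fun z : ℝ => (qdelta b r s z : ℝ)) x) :
    ∃ K : ℤ, (Nat.gcd (Int.gcd r s) b : ℝ) * x
        - ((dwork (b / Nat.gcd (Int.gcd r s) b) ((r : ℚ) / (s : ℚ)) : ℚ) : ℝ)
        - ((⌊1 - (r : ℚ) / (s : ℚ)⌋ : ℤ) : ℝ) / ((b / Nat.gcd (Int.gcd r s) b : ℕ) : ℝ) = K := by
  by_contra hK
  push_neg at hK
  apply h
  set c : ℕ := Nat.gcd (Int.gcd r s) b with hc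
  set C : ℝ := ((dwork (b / c) ((r : ℚ) / (s : ℚ)) : ℚ) : ℝ)
      + ((⌊1 - (r : ℚ) / (s : ℚ)⌋ : ℤ) : ℝ) / ((b / c : ℕ) : ℝ) with hC
  by_cases hcond : Int.gcd (s / (c : ℤ)) (((b / c : ℕ)) : ℤ) = 1
  · have hfun : (fun z : ℝ => (qdelta b r s z : ℝ))
        = fun z : ℝ => ((⌊(c : ℝ) * z - C⌋ : ℝ) + 1) := by
      funext z
      simp only [qdelta, ← hc, if_pos hcond, hC]
      push_cast
      ring_nf
    rw [hfun]
    have hyne : ((c : ℝ) * x - C) ≠ ((⌊(c : ℝ) * x - C⌋ : ℤ) : ℝ) := by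
      intro hcontra
      exact hK ⌊(c : ℝ) * x - C⌋ (by rw [hC] at hcontra; push_cast at hcontra ⊢; linarith)
    have hfl : ContinuousAt (fun t : ℝ => (⌊t⌋ : ℝ)) ((fun z : ℝ => (c : ℝ) * z - C) x) :=
      (continuousOn_floor ⌊(c : ℝ) * x - C⌋).continuousAt
        (Ico_mem_nhds ((Int.floor_le _).lt_of_ne (Ne.symm hyne)) (Int.lt_floor_add_one _))
    have haff : ContinuousAt (fun z : ℝ => (c : ℝ) * z - C) x := by fun_prop
    exact ((ContinuousAt.comp (f := fun z : ℝ => (c : ℝ) * z - C) hfl haff).add continuousAt_const)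
  · have hfun : (fun z : ℝ => (qdelta b r s z : ℝ)) = fun _ : ℝ => (0 : ℝ) := by
      funext z; simp only [qdelta, ← hc, if_neg hcond, Int.cast_zero]
    rw [hfun]; exact continuousAt_const


set_option maxHeartbeats 1600000 in
lemma key_sep (S C0 b : ℕ) (hS : 0 < S) (hb : S ^ 4 * (2 * C0 + 1) ≤ b)
    (r s t u : ℤ) (hs : s ≠ 0) (hu : u ≠ 0)
    (hsS : s.natAbs ∣ S) (huS : u.natAbs ∣ S)
    (hsC : (⌊1 - (r : ℚ) / (s : ℚ)⌋).natAbs ≤ C0) (huC : (⌊1 - (t : ℚ) / (u : ℚ)⌋).natAbs ≤ C0)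
    (x y : ℝ)
    (hx : ∃ K : ℤ, (Nat.gcd (Int.gcd r s) b : ℝ) * x
        - ((dwork (b / Nat.gcd (Int.gcd r s) b) ((r : ℚ) / (s : ℚ)) : ℚ) : ℝ)
        - ((⌊1 - (r : ℚ) / (s : ℚ)⌋ : ℤ) : ℝ) / ((b / Nat.gcd (Int.gcd r s) b : ℕ) : ℝ) = K)
    (hy : ∃ K : ℤ, (Nat.gcd (Int.gcd t u) b : ℝ) * y
        - ((dwork (b / Nat.gcd (Int.gcd t u) b) ((t : ℚ) / (u : ℚ)) : ℚ) : ℝ)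
        - ((⌊1 - (t : ℚ) / (u : ℚ)⌋ : ℤ) : ℝ) / ((b / Nat.gcd (Int.gcd t u) b : ℕ) : ℝ) = K)
    (hxy : x ≠ y) : 1 / (b : ℝ) ≤ |x - y| := by
  obtain ⟨K1, hK1⟩ := hx
  obtain ⟨K2, hK2⟩ := hy
  obtain ⟨m1, hm1⟩ := dwork_den_dvd (b / Nat.gcd (Int.gcd r s) b) r s hs
  obtain ⟨m2, hm2⟩ := dwork_den_dvd (b / Nat.gcd (Int.gcd t u) b) t u hu
  set c1 : ℕ := Nat.gcd (Int.gcd r s) b with hc1def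
  set c2 : ℕ := Nat.gcd (Int.gcd t u) b with hc2def
  set b1 : ℕ := b / c1 with hb1def
  set b2 : ℕ := b / c2 with hb2def
  set θ1 : ℝ := ((dwork b1 ((r : ℚ) / (s : ℚ)) : ℚ) : ℝ) with hθ1def
  set θ2 : ℝ := ((dwork b2 ((t : ℚ) / (u : ℚ)) : ℚ) : ℝ) with hθ2def
  set A1 : ℤ := ⌊1 - (r : ℚ) / (s : ℚ)⌋ with hA1def
  set A2 : ℤ := ⌊1 - (t : ℚ) / (u : ℚ)⌋ with hA2def
  -- positivity facts
  have hbpos : 0 < b := lt_of_lt_of_le (Nat.mul_pos (pow_pos hS 4) (Nat.succ_pos _)) hb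
  have hc1pos : 0 < c1 := Nat.gcd_pos_of_pos_right _ hbpos
  have hc2pos : 0 < c2 := Nat.gcd_pos_of_pos_right _ hbpos
  have hc1dvd : c1 ∣ b := Nat.gcd_dvd_right _ _
  have hc2dvd : c2 ∣ b := Nat.gcd_dvd_right _ _
  have hb1pos : 0 < b1 := Nat.div_pos (Nat.le_of_dvd hbpos hc1dvd) hc1pos
  have hb2pos : 0 < b2 := Nat.div_pos (Nat.le_of_dvd hbpos hc2dvd) hc2pos
  have hc1S : c1 ∣ S := (Nat.gcd_dvd_left _ _).trans
    ((Nat.gcd_dvd_right r.natAbs s.natAbs).trans hsS)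
  have hc2S : c2 ∣ S := (Nat.gcd_dvd_left _ _).trans
    ((Nat.gcd_dvd_right t.natAbs u.natAbs).trans huS)
  -- real casts
  have hsR : (s : ℝ) ≠ 0 := Int.cast_ne_zero.mpr hs
  have huR : (u : ℝ) ≠ 0 := Int.cast_ne_zero.mpr hu
  have hc1R : (c1 : ℝ) ≠ 0 := Nat.cast_ne_zero.mpr hc1pos.ne'
  have hc2R : (c2 : ℝ) ≠ 0 := Nat.cast_ne_zero.mpr hc2pos.ne'
  have hb1R : (b1 : ℝ) ≠ 0 := Nat.cast_ne_zero.mpr hb1pos.ne'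
  have hb2R : (b2 : ℝ) ≠ 0 := Nat.cast_ne_zero.mpr hb2pos.ne'
  have hbR : (0:ℝ) < (b : ℝ) := Nat.cast_pos.mpr hbpos
  have hb1c1 : (b1 : ℝ) * (c1 : ℝ) = (b : ℝ) := by
    rw [← Nat.cast_mul]; exact_mod_cast congrArg Nat.cast (Nat.div_mul_cancel hc1dvd)
  have hb2c2 : (b2 : ℝ) * (c2 : ℝ) = (b : ℝ) := by
    rw [← Nat.cast_mul]; exact_mod_cast congrArg Nat.cast (Nat.div_mul_cancel hc2dvd)
  have hθ1R : (s : ℝ) * θ1 = (m1 : ℝ) := by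
    rw [hθ1def]; exact_mod_cast congrArg (fun q : ℚ => (q : ℝ)) hm1
  have hθ2R : (u : ℝ) * θ2 = (m2 : ℝ) := by
    rw [hθ2def]; exact_mod_cast congrArg (fun q : ℚ => (q : ℝ)) hm2
  -- division-free versions of hK1, hK2
  have e1 : (A1 : ℝ) = ((c1 : ℝ) * x - θ1 - (K1 : ℝ)) * (b1 : ℝ) :=
    (div_eq_iff hb1R).mp (by linarith [hK1])
  have e2 : (A2 : ℝ) = ((c2 : ℝ) * y - θ2 - (K2 : ℝ)) * (b2 : ℝ) :=
    (div_eq_iff hb2R).mp (by linarith [hK2])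
  clear_value c1 c2 b1 b2 θ1 θ2 A1 A2
  have q1 : (s:ℝ) * b * x * c1 = (s:ℝ) * c1 * A1 + (m1:ℝ) * b + (s:ℝ) * b * K1 := by
    linear_combination (-(s:ℝ) * (c1:ℝ)) * e1 + (c1:ℝ) * (b1:ℝ) * hθ1R
      - ((s:ℝ) * x * (c1:ℝ) - (m1:ℝ) - (s:ℝ) * (K1:ℝ)) * hb1c1
  have q2 : (u:ℝ) * b * y * c2 = (u:ℝ) * c2 * A2 + (m2:ℝ) * b + (u:ℝ) * b * K2 := by
    linear_combination (-(u:ℝ) * (c2:ℝ)) * e2 + (c2:ℝ) * (b2:ℝ) * hθ2R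
      - ((u:ℝ) * y * (c2:ℝ) - (m2:ℝ) - (u:ℝ) * (K2:ℝ)) * hb2c2
  set M : ℤ := m1 * u * (c2:ℤ) - m2 * s * (c1:ℤ) + s * u * (c2:ℤ) * K1 - s * u * (c1:ℤ) * K2
    with hMdef
  clear_value M
  set DR : ℝ := (s:ℝ) * (c1:ℝ) * (u:ℝ) * (c2:ℝ) with hDRdef
  have hDRne : DR ≠ 0 := by rw [hDRdef]; positivity
  have master : (b:ℝ) * (x - y) * DR = (M:ℝ) * b + DR * ((A1:ℝ) - (A2:ℝ)) := by
    rw [hDRdef, hMdef]; push_cast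
    linear_combination ((u:ℝ) * (c2:ℝ)) * q1 - ((s:ℝ) * (c1:ℝ)) * q2
  have hdiff2 : x - y = (M:ℝ) / DR + ((A1:ℝ) - (A2:ℝ)) / (b:ℝ) := by
    field_simp
    linear_combination master
  -- bounds
  have hcast_abs : ∀ (a : ℤ) (n : ℕ), a.natAbs ≤ n → |(a:ℝ)| ≤ (n:ℝ) := by
    intro a n h
    rw [← Int.cast_abs, Int.abs_eq_natAbs]
    exact_mod_cast h
  have hA1le : |(A1:ℝ)| ≤ (C0:ℝ) := hcast_abs _ _ hsC
  have hA2le : |(A2:ℝ)| ≤ (C0:ℝ) := hcast_abs _ _ huC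
  have hSR : (0:ℝ) < (S:ℝ) := Nat.cast_pos.mpr hS
  have hsle : |(s:ℝ)| ≤ (S:ℝ) := hcast_abs _ _ (Nat.le_of_dvd hS hsS)
  have hule : |(u:ℝ)| ≤ (S:ℝ) := hcast_abs _ _ (Nat.le_of_dvd hS huS)
  have hc1le : (c1:ℝ) ≤ (S:ℝ) := Nat.cast_le.mpr (Nat.le_of_dvd hS hc1S)
  have hc2le : (c2:ℝ) ≤ (S:ℝ) := Nat.cast_le.mpr (Nat.le_of_dvd hS hc2S)
  have hDRle : |DR| ≤ (S:ℝ)^4 := by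
    rw [hDRdef, abs_mul, abs_mul, abs_mul, abs_of_nonneg (by positivity : (0:ℝ) ≤ (c1:ℝ)),
      abs_of_nonneg (by positivity : (0:ℝ) ≤ (c2:ℝ))]
    calc |(s:ℝ)| * (c1:ℝ) * |(u:ℝ)| * (c2:ℝ) ≤ (S:ℝ) * (S:ℝ) * (S:ℝ) * (S:ℝ) := by
          gcongr <;> positivity
      _ = (S:ℝ)^4 := by ring
  by_cases hM : M = 0
  · -- difference is (A1 - A2)/b
    rw [hM] at hdiff2
    simp only [Int.cast_zero, zero_div, zero_add] at hdiff2
    have hAne : A1 ≠ A2 := by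
      intro h
      apply hxy
      rw [h] at hdiff2
      simp at hdiff2
      linarith [hdiff2]
    have h1 : (1:ℝ) ≤ |(A1:ℝ) - (A2:ℝ)| := by
      rw [show (A1:ℝ) - (A2:ℝ) = ((A1 - A2 : ℤ) : ℝ) by push_cast; ring]
      rw [← Int.cast_abs]
      exact_mod_cast Int.one_le_abs (sub_ne_zero.mpr hAne)
    rw [hdiff2, abs_div, abs_of_pos hbR]
    gcongr
  · have hM1 : (1:ℝ) ≤ |(M:ℝ)| := by
      rw [← Int.cast_abs]; exact_mod_cast Int.one_le_abs hM
    have hDRpos : (0:ℝ) < |DR| := abs_pos.mpr hDRne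
    have hU : 1/(S:ℝ)^4 ≤ |(M:ℝ)/DR| := by
      rw [abs_div]
      calc 1/(S:ℝ)^4 ≤ 1/|DR| := one_div_le_one_div_of_le hDRpos hDRle
        _ ≤ |(M:ℝ)|/|DR| := by gcongr
    have hE : |((A1:ℝ) - (A2:ℝ))/(b:ℝ)| ≤ (2*C0:ℝ)/(b:ℝ) := by
      rw [abs_div, abs_of_pos hbR]
      gcongr
      calc |(A1:ℝ) - (A2:ℝ)| ≤ |(A1:ℝ)| + |(A2:ℝ)| := abs_sub _ _
        _ ≤ 2*(C0:ℝ) := by linarith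
    have hfin : 1/(b:ℝ) + (2*C0:ℝ)/(b:ℝ) ≤ 1/(S:ℝ)^4 := by
      rw [← add_div, div_le_div_iff₀ hbR (by positivity)]
      have : ((S^4 * (2*C0+1) : ℕ) : ℝ) ≤ (b:ℝ) := Nat.cast_le.mpr hb
      push_cast at this
      nlinarith
    have habs : |(M:ℝ)/DR| - |((A1:ℝ) - (A2:ℝ))/(b:ℝ)| ≤ |x - y| :=
      abs_lower_of_eq _ _ _ hdiff2
    linarith

end AuxLemmas

/-- Lemma 4.4, second part: for `b` large enough, distinct discontinuity
points of `Δ_b^{𝐫,𝐭}` are at distance at least `1/b`. -/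
theorem qDeltaFn_jumps_separated {v w : ℕ} (rr : Fin v → ℤ × ℤ) (tt : Fin w → ℤ × ℤ)
    (hs : ∀ i, (rr i).2 ≠ 0) (hu : ∀ j, (tt j).2 ≠ 0) :
    ∃ B : ℕ, 0 < B ∧ ∀ b : ℕ, B ≤ b →
      ∀ x y : ℝ, ¬ ContinuousAt (fun z : ℝ => (qDeltaFn b rr tt z : ℝ)) x →
        ¬ ContinuousAt (fun z : ℝ => (qDeltaFn b rr tt z : ℝ)) y → x ≠ y →
          1 / (b : ℝ) ≤ |x - y| := by
  set S : ℕ := (∏ i, ((rr i).2).natAbs) * (∏ j, ((tt j).2).natAbs) with hSdef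
  have hS : 0 < S := by
    apply Nat.mul_pos <;> exact Finset.prod_pos fun i _ => Int.natAbs_pos.mpr (by
      first | exact hs i | exact hu i)
  set C0 : ℕ := (∑ i, (⌊1 - ((rr i).1 : ℚ) / ((rr i).2 : ℚ)⌋).natAbs)
      + (∑ j, (⌊1 - ((tt j).1 : ℚ) / ((tt j).2 : ℚ)⌋).natAbs) with hC0def
  refine ⟨S ^ 4 * (2 * C0 + 1), Nat.mul_pos (pow_pos hS 4) (Nat.succ_pos _), ?_⟩
  intro b hb x y hx hy hxy
  -- every discontinuity point comes from some pair with good properties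
  have hK : ∀ z : ℝ, ¬ ContinuousAt (fun zz : ℝ => (qDeltaFn b rr tt zz : ℝ)) z →
      ∃ r s : ℤ, s ≠ 0 ∧ s.natAbs ∣ S ∧ (⌊1 - (r : ℚ) / (s : ℚ)⌋).natAbs ≤ C0 ∧
        ∃ K : ℤ, (Nat.gcd (Int.gcd r s) b : ℝ) * z
          - ((dwork (b / Nat.gcd (Int.gcd r s) b) ((r : ℚ) / (s : ℚ)) : ℚ) : ℝ)
          - ((⌊1 - (r : ℚ) / (s : ℚ)⌋ : ℤ) : ℝ) / ((b / Nat.gcd (Int.gcd r s) b : ℕ) : ℝ)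
          = K := by
    intro z hz
    have hsplit : (∃ i, ¬ ContinuousAt (fun zz : ℝ => (qdelta b (rr i).1 (rr i).2 zz : ℝ)) z)
        ∨ (∃ j, ¬ ContinuousAt (fun zz : ℝ => (qdelta b (tt j).1 (tt j).2 zz : ℝ)) z) := by
      by_contra hcon
      push_neg at hcon
      obtain ⟨h1, h2⟩ := hcon
      apply hz
      have hfe : (fun zz : ℝ => (qDeltaFn b rr tt zz : ℝ))
          = fun zz : ℝ => (∑ i, ((qdelta b (rr i).1 (rr i).2 zz : ℤ) : ℝ))
            - (∑ j, ((qdelta b (tt j).1 (tt j).2 zz : ℤ) : ℝ)) := by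
        funext zz
        simp only [qDeltaFn]
        push_cast
        ring
      rw [hfe]
      exact ContinuousAt.sub
        (tendsto_finset_sum _ fun i _ => h1 i)
        (tendsto_finset_sum _ fun j _ => h2 j)
    rcases hsplit with ⟨i, hi⟩ | ⟨j, hj⟩
    · refine ⟨(rr i).1, (rr i).2, hs i, ?_, ?_, qdelta_discont b (rr i).1 (rr i).2 z hi⟩
      · exact Dvd.dvd.mul_right (Finset.dvd_prod_of_mem _ (Finset.mem_univ i)) _
      · calc (⌊1 - ((rr i).1 : ℚ) / ((rr i).2 : ℚ)⌋).natAbs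
            ≤ ∑ i', (⌊1 - ((rr i').1 : ℚ) / ((rr i').2 : ℚ)⌋).natAbs :=
              Finset.single_le_sum
                (f := fun i' => (⌊1 - ((rr i').1 : ℚ) / ((rr i').2 : ℚ)⌋).natAbs)
                (fun _ _ => Nat.zero_le _) (Finset.mem_univ i)
          _ ≤ C0 := Nat.le_add_right _ _
    · refine ⟨(tt j).1, (tt j).2, hu j, ?_, ?_, qdelta_discont b (tt j).1 (tt j).2 z hj⟩
      · exact Dvd.dvd.mul_left (Finset.dvd_prod_of_mem _ (Finset.mem_univ j)) _
      · calc (⌊1 - ((tt j).1 : ℚ) / ((tt j).2 : ℚ)⌋).natAbs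
            ≤ ∑ j', (⌊1 - ((tt j').1 : ℚ) / ((tt j').2 : ℚ)⌋).natAbs :=
              Finset.single_le_sum
                (f := fun j' => (⌊1 - ((tt j').1 : ℚ) / ((tt j').2 : ℚ)⌋).natAbs)
                (fun _ _ => Nat.zero_le _) (Finset.mem_univ j)
          _ ≤ C0 := Nat.le_add_left _ _
  obtain ⟨r, s, hs1, hs2, hs3, hs4⟩ := hK x hx
  obtain ⟨t, u, hu1, hu2, hu3, hu4⟩ := hK y hy
  exact key_sep S C0 b hS hb r s t u hs1 hu1 hs2 hu2 hs3 hu3 x y hs4 hu4 hxy
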